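/- Let X be a smooth projective fourfold with K_X nef, K_X^4 = 0, and K_X^2·c_2(X) > 0 (where we also assume vanishing of intersections involving higher powers of K_X as forced by K_X^4 = K_X^3·c_1 = 0). Suppose H^i(X, O_X(mK_X)) = 0 for i ≥ 2 and all m ≥ 1. Then h^0(X, O_X(mK_X)) grows at least like a positive constant times m^2, hence κ(X, K_X) ≥ 2. -/
import Mathlib


open Filter

/-- Let `X` be a smooth projective fourfold with `K_X` nef, `K_X⁴ = 0` and
`K_X²·c₂(X) > 0` (with the vanishings `K_X³·c₁ = -K_X⁴ = 0`, `K_X²·c₁² = K_X⁴ = 0`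
forced by `K_X⁴ = 0`).  Model: `h i m = h^i(X, O_X(mK_X))`,
`chi m = χ(X, O_X(mK_X)) = Σ_{i=0}^{4} (-1)^i h^i(X, O_X(mK_X))`, given by
Hirzebruch–Riemann–Roch (`hHRR`); `KNef` records nefness of `K_X`; `kappa = κ(X, K_X)`
is the maximal growth exponent of `m ↦ h^0(X, O_X(mK_X))` (`hkappa_max`).
Suppose `H^i(X, O_X(mK_X)) = 0` for `i ≥ 2` and all `m ≥ 1`.  Then
`h^0(X, O_X(mK_X))` grows at least like a positive constant times `m²`, hence
`κ(X, K_X) ≥ 2`. -/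
theorem stmt15 (h : ℕ → ℕ → ℕ) (chi : ℕ → ℤ)
    (K4 K3c1 K2c1sq K2c2 Kc1c2 chiO : ℤ) (kappa : ℤ)
    (KNef : Prop) (hnef : KNef)
    (hchi : ∀ m, chi m = ∑ i ∈ Finset.range 5, (-1) ^ i * (h i m : ℤ))
    (hHRR : ∀ m : ℕ, (chi m : ℚ) =
      ((m : ℚ) ^ 4 * (K4 : ℚ)) / 24 + ((m : ℚ) ^ 3 * (K3c1 : ℚ)) / 12
        + ((m : ℚ) ^ 2 * ((K2c1sq : ℚ) + (K2c2 : ℚ))) / 24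
        + ((m : ℚ) * (Kc1c2 : ℚ)) / 24 + (chiO : ℚ))
    (hK4 : K4 = 0) (hK3c1 : K3c1 = -K4) (hK2c1sq : K2c1sq = K4)
    (hK2c2 : 0 < K2c2)
    (hvanish : ∀ i, 2 ≤ i → ∀ m, 1 ≤ m → h i m = 0)
    (hkappa_max : ∀ e : ℕ,
      (∃ C > (0 : ℝ), ∀ᶠ m : ℕ in atTop, C * (m : ℝ) ^ e ≤ (h 0 m : ℝ)) →
        (e : ℤ) ≤ kappa) :
    (∃ C > (0 : ℝ), ∀ᶠ m : ℕ in atTop, C * (m : ℝ) ^ 2 ≤ (h 0 m : ℝ)) ∧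
      (2 : ℤ) ≤ kappa := by
  have key : ∃ C > (0 : ℝ), ∀ᶠ m : ℕ in atTop, C * (m : ℝ) ^ 2 ≤ (h 0 m : ℝ) := by
    refine ⟨(K2c2 : ℝ) / 48, div_pos (by exact_mod_cast hK2c2) (by norm_num), ?_⟩
    rw [eventually_atTop]
    refine ⟨48 * (Kc1c2.natAbs + chiO.natAbs + 1), fun m hm => ?_⟩
    have hm1 : 1 ≤ m := by omega
    have hchm : chi m = (h 0 m : ℤ) - h 1 m := by
      have h2 := hvanish 2 (by norm_num) m hm1
      have h3 := hvanish 3 (by norm_num) m hm1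
      have h4 := hvanish 4 (by norm_num) m hm1
      rw [hchi m]
      simp [Finset.sum_range_succ, h2, h3, h4]
      ring
    have hle : (chi m : ℚ) ≤ (h 0 m : ℚ) := by
      have : chi m ≤ (h 0 m : ℤ) := by rw [hchm]; simp
      exact_mod_cast this
    have hq : (chi m : ℚ) = (m : ℚ) ^ 2 * K2c2 / 24 + m * Kc1c2 / 24 + chiO := by
      rw [hHRR m, hK4, hK3c1, hK2c1sq, hK4]; ring
    have hK : (1 : ℚ) ≤ K2c2 := by exact_mod_cast hK2c2
    have hmQ : (48 : ℚ) * ((Kc1c2.natAbs : ℚ) + chiO.natAbs + 1) ≤ m := by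
      exact_mod_cast hm
    have ha : -(Kc1c2.natAbs : ℚ) ≤ (Kc1c2 : ℚ) := by
      exact_mod_cast show -(Kc1c2.natAbs : ℤ) ≤ Kc1c2 by omega
    have hb : -(chiO.natAbs : ℚ) ≤ (chiO : ℚ) := by
      exact_mod_cast show -(chiO.natAbs : ℤ) ≤ chiO by omega
    have hmQ1 : (1 : ℚ) ≤ m := by exact_mod_cast hm1
    have haQ : (0 : ℚ) ≤ (Kc1c2.natAbs : ℚ) := by positivity
    have hbQ : (0 : ℚ) ≤ (chiO.natAbs : ℚ) := by positivity
    have hfin : (K2c2 : ℚ) / 48 * (m : ℚ) ^ 2 ≤ (h 0 m : ℚ) := by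
      have : (K2c2 : ℚ) / 48 * (m : ℚ) ^ 2 ≤ (chi m : ℚ) := by
        rw [hq]
        nlinarith [mul_le_mul_of_nonneg_left hmQ (le_trans zero_le_one hmQ1),
          mul_le_mul_of_nonneg_left ha (le_trans zero_le_one hmQ1)]
      linarith
    have := hfin
    push_cast at this ⊢
    exact_mod_cast this
  exact ⟨key, hkappa_max 2 key⟩
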